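/- Let X and Y be real-analytic functions on ℝ × (-ε, ε), 2π-periodic in x, such that g(x,y) = (X(x,y), Y(x,y)) is area-preserving (Jacobian determinant identically 1) and Y(x,0) = 0 for all x. Then Y(x,y) = y·H₂(x,y) for a real-analytic function H₂ that is 2π-periodic in x, and H₂(x,0) > 0 for all x provided ∂_y Y(x,0) > 0; moreover if Y(x,y) = y^k H₂(x,y) with H₂(x,0) ≠ 0 for all x, then necessarily k = 1. -/

import Mathlib

open Set Real
open Filter
open scoped ENNReal NNReal Topology

noncomputable section StmtAux

/-- projection onto the first coordinate, as a map `ℝ×ℝ → ℝ×ℝ`. -/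
def stmtRho : (ℝ × ℝ) →L[ℝ] (ℝ × ℝ) :=
  (ContinuousLinearMap.inl ℝ ℝ ℝ).comp (ContinuousLinearMap.fst ℝ ℝ ℝ)

lemma stmtRho_apply (z : ℝ × ℝ) : stmtRho z = (z.1, 0) := rfl

lemma stmtRho_norm_le : ‖stmtRho‖ ≤ 1 := by
  refine ContinuousLinearMap.opNorm_le_bound _ zero_le_one (fun z => ?_)
  rw [one_mul, stmtRho_apply]
  have : ‖((z.1 : ℝ), (0:ℝ))‖ = ‖z.1‖ := by
    simp [Prod.norm_def]
  rw [this]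
  exact norm_fst_le z

lemma stmt_e₂_norm : ‖((0:ℝ), (1:ℝ))‖ = 1 := by
  simp [Prod.norm_def]

lemma stmt_cons_eq {n : ℕ} (z : ℝ × ℝ) (k : Fin (n+1)) :
    (Fin.cons ((0:ℝ),(1:ℝ)) (fun _ : Fin n => z) : Fin (n+1) → ℝ × ℝ) k
      = if k = 0 then ((0:ℝ),(1:ℝ)) else z := by
  induction k using Fin.cases with
  | zero => simp
  | succ i => simp [Fin.succ_ne_zero]

/-- Telescoping identity for continuous multilinear maps evaluated on the diagonal. -/
lemma stmt_telescope {m : ℕ} (f : ContinuousMultilinearMap ℝ (fun _ : Fin m => (ℝ × ℝ)) ℝ)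
    (a b : ℝ × ℝ) :
    f (fun _ => b) - f (fun _ => a)
      = ∑ j : Fin m, f (Function.update
          (fun i : Fin m => if (i:ℕ) < (j:ℕ) then a else b) j (b - a)) := by
  have key : ∀ j : Fin m,
      f (Function.update (fun i : Fin m => if (i:ℕ) < (j:ℕ) then a else b) j (b - a))
        = f (fun i : Fin m => if (i:ℕ) < (j:ℕ) then a else b)
          - f (fun i : Fin m => if (i:ℕ) < (j:ℕ)+1 then a else b) := by
    intro j
    have hb : (fun i : Fin m => if (i:ℕ) < (j:ℕ) then a else b)
        = Function.update (fun i : Fin m => if (i:ℕ) < (j:ℕ) then a else b) j b := by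
      funext i
      rcases eq_or_ne i j with rfl | hij
      · simp
      · rw [Function.update_of_ne hij]
    have ha : (fun i : Fin m => if (i:ℕ) < (j:ℕ)+1 then a else b)
        = Function.update (fun i : Fin m => if (i:ℕ) < (j:ℕ) then a else b) j a := by
      funext i
      rcases eq_or_ne i j with rfl | hij
      · simp
      · rw [Function.update_of_ne hij]
        have : (i:ℕ) < (j:ℕ)+1 ↔ (i:ℕ) < (j:ℕ) := by
          constructor
          · intro h
            rcases Nat.lt_succ_iff_lt_or_eq.mp h with h | h
            · exact h
            · exact absurd (Fin.ext h) hij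
          · exact fun h => Nat.lt_succ_of_lt h
        simp [this]
    rw [f.map_update_sub, ← hb, ← ha]
  rw [Finset.sum_congr rfl (fun j _ => key j)]
  rw [Fin.sum_univ_eq_sum_range
    (fun j => f (fun i : Fin m => if (i:ℕ) < j then a else b)
      - f (fun i : Fin m => if (i:ℕ) < j+1 then a else b))]
  rw [Finset.sum_range_sub' (fun j => f (fun i : Fin m => if (i:ℕ) < j then a else b))]
  have h0 : (fun i : Fin m => if (i:ℕ) < 0 then a else b) = fun _ => b := by
    funext i; simp
  have hm : (fun i : Fin m => if (i:ℕ) < m then a else b) = fun _ => a := by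
    funext i; simp [i.isLt]
  rw [h0, hm]


/-- The `j`-th term of the divided series. -/
def stmtTerm (p : FormalMultilinearSeries ℝ (ℝ × ℝ) ℝ) (n : ℕ) (j : Fin (n+1)) :
    ContinuousMultilinearMap ℝ (fun _ : Fin n => (ℝ × ℝ)) ℝ :=
  (((p (n+1)).compContinuousLinearMap
      (fun i => if (i:ℕ) < (j:ℕ) then stmtRho else ContinuousLinearMap.id ℝ (ℝ × ℝ))).domDomCongr
    (Equiv.swap j 0)).curryLeft ((0:ℝ),(1:ℝ))

lemma stmtTerm_diag (p : FormalMultilinearSeries ℝ (ℝ × ℝ) ℝ) (n : ℕ) (j : Fin (n+1))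
    (z : ℝ × ℝ) :
    stmtTerm p n j (fun _ => z)
      = p (n+1) (Function.update
          (fun i : Fin (n+1) => if (i:ℕ) < (j:ℕ) then ((z.1, 0) : ℝ × ℝ) else z) j ((0:ℝ),(1:ℝ))) := by
  rw [stmtTerm, ContinuousMultilinearMap.curryLeft_apply]
  rw [ContinuousMultilinearMap.domDomCongr_apply]
  rw [ContinuousMultilinearMap.compContinuousLinearMap_apply]
  congr 1
  funext i
  rw [stmt_cons_eq]
  have hswap : Equiv.swap j 0 i = 0 ↔ i = j := by
    rw [Equiv.swap_apply_eq_iff]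
    simp [Equiv.swap_apply_right]
  rcases eq_or_ne i j with rfl | hij
  · have h1 : Equiv.swap i 0 i = 0 := Equiv.swap_apply_left i 0
    rw [if_pos h1, Function.update_self]
    have : ¬ ((i:ℕ) < (i:ℕ)) := lt_irrefl _
    simp [this]
  · have h1 : ¬ (Equiv.swap j 0 i = 0) := fun h => hij (hswap.mp h)
    rw [if_neg h1, Function.update_of_ne hij]
    by_cases hlt : (i:ℕ) < (j:ℕ)
    · simp [hlt, stmtRho_apply]
    · simp [hlt]

lemma stmtTerm_norm (p : FormalMultilinearSeries ℝ (ℝ × ℝ) ℝ) (n : ℕ) (j : Fin (n+1)) :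
    ‖stmtTerm p n j‖ ≤ ‖p (n+1)‖ := by
  rw [stmtTerm]
  set M := ((p (n+1)).compContinuousLinearMap
      (fun i => if (i:ℕ) < (j:ℕ) then stmtRho else ContinuousLinearMap.id ℝ (ℝ × ℝ))).domDomCongr
    (Equiv.swap j 0) with hM
  calc ‖M.curryLeft ((0:ℝ),(1:ℝ))‖ ≤ ‖M.curryLeft‖ * ‖((0:ℝ),(1:ℝ))‖ :=
        M.curryLeft.le_opNorm _
    _ = ‖M‖ := by rw [stmt_e₂_norm, mul_one, ContinuousMultilinearMap.curryLeft_norm]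
    _ ≤ ‖p (n+1)‖ := by
        rw [hM, ContinuousMultilinearMap.norm_domDomCongr]
        refine le_trans (ContinuousMultilinearMap.norm_compContinuousLinearMap_le _ _) ?_
        have : ∀ i : Fin (n+1),
            ‖(if (i:ℕ) < (j:ℕ) then stmtRho else ContinuousLinearMap.id ℝ (ℝ × ℝ))‖ ≤ 1 := by
          intro i
          by_cases h : (i:ℕ) < (j:ℕ)
          · simpa [h] using stmtRho_norm_le
          · simpa [h] using ContinuousLinearMap.norm_id_le (E := ℝ × ℝ)
        calc ‖p (n+1)‖ * ∏ i : Fin (n+1), ‖(if (i:ℕ) < (j:ℕ) then stmtRho else ContinuousLinearMap.id ℝ (ℝ × ℝ))‖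
            ≤ ‖p (n+1)‖ * 1 := by
              refine mul_le_mul_of_nonneg_left ?_ (norm_nonneg _)
              exact Finset.prod_le_one (fun i _ => norm_nonneg _) (fun i _ => this i)
          _ = ‖p (n+1)‖ := mul_one _


lemma stmt_nnnorm_inl (u : ℝ) : ‖((u, 0) : ℝ × ℝ)‖₊ = ‖u‖₊ := by
  ext
  simp [Prod.norm_def]

/-- If `f` is represented by `p` near `c` with `c.2 = 0` and `f` vanishes on the horizontal
axis near `c`, then all diagonal values of `p` on horizontal vectors vanish. -/
lemma stmt_coeff_vanish {f : ℝ × ℝ → ℝ} {p : FormalMultilinearSeries ℝ (ℝ × ℝ) ℝ}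
    {c : ℝ × ℝ} {r : ℝ≥0∞} (hp : HasFPowerSeriesOnBall f p c r)
    (h0 : ∀ᶠ x in nhds c.1, f (x, 0) = 0) (hc : c.2 = 0) :
    ∀ (n : ℕ) (w : ℝ), (p n fun _ => ((w, 0) : ℝ × ℝ)) = 0 := by
  set L : ℝ →L[ℝ] ℝ × ℝ := ContinuousLinearMap.inl ℝ ℝ ℝ with hL
  set q1 := p.compContinuousLinearMap L with hq1
  -- bound the radius of q1
  obtain ⟨r', hr'0, hr'rad⟩ := ENNReal.lt_iff_exists_nnreal_btwn.mp
    (lt_of_lt_of_le hp.r_pos hp.r_le)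
  obtain ⟨C, hC0, hC⟩ := p.norm_mul_pow_le_of_lt_radius hr'rad
  have hnormL : ‖L‖ ≤ 1 := by
    refine ContinuousLinearMap.opNorm_le_bound _ zero_le_one (fun u => ?_)
    rw [one_mul]
    have : L u = ((u, 0) : ℝ × ℝ) := rfl
    rw [this]
    simp [Prod.norm_def]
  have hq1n : ∀ n, ‖q1 n‖ ≤ ‖p n‖ := by
    intro n
    refine le_trans (ContinuousMultilinearMap.norm_compContinuousLinearMap_le _ _) ?_
    calc ‖p n‖ * ∏ _i : Fin n, ‖L‖ ≤ ‖p n‖ * 1 := by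
          refine mul_le_mul_of_nonneg_left ?_ (norm_nonneg _)
          exact Finset.prod_le_one (fun i _ => norm_nonneg _) (fun i _ => hnormL)
      _ = ‖p n‖ := mul_one _
  have hq1rad : (r' : ℝ≥0∞) ≤ q1.radius := by
    refine q1.le_radius_of_bound C (fun n => ?_)
    exact le_trans (mul_le_mul_of_nonneg_right (hq1n n) (pow_nonneg r'.coe_nonneg n)) (hC n)
  -- q1 represents the slice u ↦ f (c + (u,0)) near 0
  have hslice : HasFPowerSeriesOnBall (fun u : ℝ => f (c + (u, 0))) q1 0 (min r r') := by
    refine ⟨le_trans (min_le_right _ _) hq1rad, lt_min hp.r_pos (by exact_mod_cast hr'0), ?_⟩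
    intro u hu
    have hu' : ((u, 0) : ℝ × ℝ) ∈ Metric.eball (0 : ℝ × ℝ) r := by
      rw [Metric.mem_eball] at hu ⊢
      rw [edist_zero_right] at hu ⊢
      calc (‖((u,0) : ℝ × ℝ)‖₊ : ℝ≥0∞) = (‖u‖₊ : ℝ≥0∞) := by rw [stmt_nnnorm_inl]
        _ < min r r' := hu
        _ ≤ r := min_le_left _ _
    have := hp.hasSum hu'
    rw [zero_add]
    convert this using 1
    rfl
  have hg0 : (fun u : ℝ => f (c + (u, 0))) =ᶠ[nhds (0:ℝ)] 0 := by
    have htend : Filter.Tendsto (fun u : ℝ => c.1 + u) (nhds 0) (nhds c.1) := by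
      have hco : Continuous (fun u : ℝ => c.1 + u) := continuous_const.add continuous_id
      simpa using hco.tendsto (0 : ℝ)
    filter_upwards [htend.eventually h0] with u hu
    have hcu : c + ((u, 0) : ℝ × ℝ) = (c.1 + u, 0) := by
      ext <;> simp [hc]
    rw [hcu]
    exact hu
  have hq1zero : q1 = 0 := (hslice.hasFPowerSeriesAt.congr hg0).eq_zero
  intro n w
  have h2 : q1 n (fun _ => w) = p n (fun _ => ((w, 0) : ℝ × ℝ)) := rfl
  rw [← h2, hq1zero]
  rfl


/-- Division lemma: an analytic function of two variables vanishing on the horizontal axis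
is divisible by the second coordinate, with analytic quotient. -/
lemma stmt_divide (f : ℝ × ℝ → ℝ) (a : ℝ) (hf : AnalyticAt ℝ f (a, 0))
    (h0 : ∀ᶠ x in nhds a, f (x, 0) = 0) :
    ∃ h : ℝ × ℝ → ℝ, AnalyticAt ℝ h (a, 0) ∧ ∀ᶠ q in nhds ((a, 0) : ℝ × ℝ), f q = q.2 * h q := by
  obtain ⟨p, r, hp⟩ := hf
  set c : ℝ × ℝ := (a, 0) with hcdef
  have hc : c.2 = 0 := rfl
  have h0' : ∀ᶠ x in nhds c.1, f (x, 0) = 0 := h0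
  have hvan := stmt_coeff_vanish hp h0' hc
  -- the quotient series
  set q : FormalMultilinearSeries ℝ (ℝ × ℝ) ℝ := fun n => ∑ j : Fin (n+1), stmtTerm p n j
    with hqdef
  -- key diagonal identity
  have hdiag : ∀ (n : ℕ) (z : ℝ × ℝ),
      z.2 * (q n fun _ => z) = p (n+1) (fun _ => z) := by
    intro n z
    have htel := stmt_telescope (p (n+1)) ((z.1, 0) : ℝ × ℝ) z
    have hzz : p (n+1) (fun _ => ((z.1, 0) : ℝ × ℝ)) = 0 := hvan (n+1) z.1
    have hsub : z - ((z.1, 0) : ℝ × ℝ) = z.2 • ((0:ℝ), (1:ℝ)) := by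
      ext <;> simp
    rw [hzz, sub_zero, hsub] at htel
    have hterm : ∀ j : Fin (n+1),
        (p (n+1)) (Function.update
            (fun i : Fin (n+1) => if (i:ℕ) < (j:ℕ) then ((z.1, 0) : ℝ × ℝ) else z) j
            (z.2 • ((0:ℝ), (1:ℝ))))
          = z.2 * stmtTerm p n j (fun _ => z) := by
      intro j
      rw [(p (n+1)).map_update_smul, stmtTerm_diag]
      rfl
    rw [Finset.sum_congr rfl (fun j _ => hterm j)] at htel
    rw [← Finset.mul_sum] at htel
    have : q n (fun _ => z) = ∑ j : Fin (n+1), stmtTerm p n j (fun _ => z) := by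
      rw [hqdef]
      simp [ContinuousMultilinearMap.sum_apply]
    rw [this, ← htel]
  -- radius of q is positive
  obtain ⟨r', hr'0, hr'rad⟩ := ENNReal.lt_iff_exists_nnreal_btwn.mp
    (lt_of_lt_of_le hp.r_pos hp.r_le)
  obtain ⟨C, hC0, hC⟩ := p.norm_mul_pow_le_of_lt_radius hr'rad
  have hr'pos : (0:ℝ) < (r' : ℝ) := by exact_mod_cast hr'0
  have hqrad : ((r'/2 : ℝ≥0) : ℝ≥0∞) ≤ q.radius := by
    refine q.le_radius_of_bound (2 * C / (r' : ℝ)) (fun n => ?_)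
    have h1 : ‖q n‖ ≤ ((n:ℝ)+1) * ‖p (n+1)‖ := by
      rw [hqdef]
      refine le_trans (norm_sum_le _ _) ?_
      calc (∑ j : Fin (n+1), ‖stmtTerm p n j‖) ≤ ∑ _j : Fin (n+1), ‖p (n+1)‖ :=
            Finset.sum_le_sum (fun j _ => stmtTerm_norm p n j)
        _ = ((n:ℝ)+1) * ‖p (n+1)‖ := by simp [Finset.sum_const]
    have h2 : ‖p (n+1)‖ * (r' : ℝ)^n ≤ C / (r' : ℝ) := by
      rw [le_div_iff₀ hr'pos]
      calc ‖p (n+1)‖ * (r' : ℝ)^n * (r' : ℝ) = ‖p (n+1)‖ * (r' : ℝ)^(n+1) := by ring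
        _ ≤ C := hC (n+1)
    have h3 : ((n:ℝ)+1) ≤ 2 * 2^n := by
      have := Nat.lt_two_pow_self (n := n+1)
      have h4 : ((n:ℕ)+1 : ℝ) ≤ (2^(n+1) : ℕ) := by exact_mod_cast this.le
      calc ((n:ℝ)+1) ≤ ((2:ℝ)^(n+1)) := by push_cast at h4 ⊢; linarith
        _ = 2 * 2^n := by ring
    have hcoe : ((r'/2 : ℝ≥0) : ℝ) = (r' : ℝ)/2 := by
      push_cast; ring
    have hppos : (0:ℝ) ≤ ‖p (n+1)‖ * (r' : ℝ)^n := by positivity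
    calc ‖q n‖ * ((r'/2 : ℝ≥0) : ℝ)^n ≤ (((n:ℝ)+1) * ‖p (n+1)‖) * ((r' : ℝ)/2)^n := by
          rw [hcoe]
          refine mul_le_mul_of_nonneg_right h1 ?_
          positivity
      _ = (((n:ℝ)+1)/2^n) * (‖p (n+1)‖ * (r' : ℝ)^n) := by
          rw [div_pow]
          ring
      _ ≤ 2 * (C / (r' : ℝ)) := by
          have hfrac : ((n:ℝ)+1)/2^n ≤ 2 := by
            rw [div_le_iff₀ (by positivity : (0:ℝ) < 2^n)]
            linarith [h3]
          have hCr : (0:ℝ) ≤ C / (r' : ℝ) := by positivity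
          have hle2 : ‖p (n+1)‖ * (r' : ℝ)^n ≤ C / (r' : ℝ) := h2
          have hfr0 : (0:ℝ) ≤ ((n:ℝ)+1)/2^n := by positivity
          nlinarith
      _ = 2 * C / (r' : ℝ) := by ring
  have hqpos : 0 < q.radius := by
    refine lt_of_lt_of_le ?_ hqrad
    have hr'n : 0 < r' := ENNReal.coe_pos.mp hr'0
    exact_mod_cast (div_pos hr'n (by norm_num) : (0:ℝ≥0) < r'/2)
  have hqball := q.hasFPowerSeriesOnBall hqpos
  refine ⟨fun pt => q.sum (pt - c), ?_, ?_⟩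
  · have h1 : AnalyticAt ℝ q.sum (0 : ℝ × ℝ) := hqball.analyticAt
    have h2 : AnalyticAt ℝ (fun pt : ℝ × ℝ => pt - c) c := analyticAt_id.sub analyticAt_const
    exact AnalyticAt.comp (g := q.sum) (f := fun pt : ℝ × ℝ => pt - c) (x := c)
      (by simpa using h1) h2
  · have hδ : (0:ℝ≥0∞) < min r q.radius := lt_min hp.r_pos hqpos
    filter_upwards [EMetric.ball_mem_nhds c hδ] with pt hpt
    set z := pt - c with hz
    have hed : edist z 0 = edist pt c := by
      rw [hz, edist_zero_right, edist_eq_enorm_sub]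
    have hz_r : z ∈ Metric.eball (0 : ℝ × ℝ) r := by
      rw [Metric.mem_eball, hed]
      exact lt_of_lt_of_le hpt (min_le_left _ _)
    have hz_q : z ∈ Metric.eball (0 : ℝ × ℝ) q.radius := by
      rw [Metric.mem_eball, hed]
      exact lt_of_lt_of_le hpt (min_le_right _ _)
    have hA : HasSum (fun n => p n fun _ => z) (f pt) := by
      have := hp.hasSum hz_r
      rwa [hz, add_sub_cancel] at this
    have hB : HasSum (fun n => q n fun _ => z) (q.sum z) := by
      have := hqball.hasSum hz_q
      rwa [zero_add] at this
    have hBm := hB.mul_left z.2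
    have hfun : (fun n => z.2 * (q n fun _ => z)) = fun n => p (n+1) (fun _ => z) :=
      funext (fun n => hdiag n z)
    rw [hfun] at hBm
    have hp0 : (p 0 fun _ => z) = 0 := by
      rw [hp.coeff_zero]
      have hca : c = ((c.1 : ℝ), (0:ℝ)) := by
        ext
        · rfl
        · exact hc
      rw [hca]
      exact h0.self_of_nhds
    have hA' : HasSum (fun n => p (n+1) fun _ => z) (f pt) := by
      have := (hasSum_nat_add_iff' 1).mpr hA
      simpa [hp0] using this
    have := hA'.unique hBm
    rw [this]
    have hz2 : z.2 = pt.2 := by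
      rw [hz]
      simp [hc]
    rw [hz2]


lemma stmt_slice {F : ℝ × ℝ → ℝ} {x y : ℝ} (hF : AnalyticAt ℝ F (x, y)) :
    AnalyticAt ℝ (fun t => F (x, t)) y := by
  have hcurve : AnalyticAt ℝ (fun t : ℝ => ((x, t) : ℝ × ℝ)) y :=
    analyticAt_const.prod analyticAt_id
  exact AnalyticAt.comp (g := F) (f := fun t : ℝ => ((x, t) : ℝ × ℝ)) (x := y) hF hcurve

end StmtAux

theorem stmt_16 (ε : ℝ) (hε : 0 < ε) (X Y : ℝ → ℝ → ℝ)
    (hXan : AnalyticOnNhd ℝ (fun p : ℝ × ℝ => X p.1 p.2) (univ ×ˢ Ioo (-ε) ε))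
    (hYan : AnalyticOnNhd ℝ (fun p : ℝ × ℝ => Y p.1 p.2) (univ ×ˢ Ioo (-ε) ε))
    (hXper : ∀ x y, X (x + 2*π) y = X x y)
    (hYper : ∀ x y, Y (x + 2*π) y = Y x y)
    (harea : ∀ x : ℝ, ∀ y ∈ Ioo (-ε) ε,
      deriv (fun t => X t y) x * deriv (fun t => Y x t) y
        - deriv (fun t => X x t) y * deriv (fun t => Y t y) x = 1)
    (hY0 : ∀ x, Y x 0 = 0) :
    (∃ H₂ : ℝ → ℝ → ℝ,
      AnalyticOnNhd ℝ (fun p : ℝ × ℝ => H₂ p.1 p.2) (univ ×ˢ Ioo (-ε) ε) ∧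
      (∀ x y, H₂ (x + 2*π) y = H₂ x y) ∧
      (∀ x : ℝ, ∀ y ∈ Ioo (-ε) ε, Y x y = y * H₂ x y) ∧
      ((∀ x, 0 < deriv (fun t => Y x t) 0) → ∀ x, 0 < H₂ x 0)) ∧
    (∀ k : ℕ, 0 < k → ∀ H₂' : ℝ → ℝ → ℝ,
      AnalyticOnNhd ℝ (fun p : ℝ × ℝ => H₂' p.1 p.2) (univ ×ˢ Ioo (-ε) ε) →
      (∀ x : ℝ, ∀ y ∈ Ioo (-ε) ε, Y x y = y^k * H₂' x y) →
      (∀ x, H₂' x 0 ≠ 0) → k = 1) := by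
  have h0mem : (0:ℝ) ∈ Ioo (-ε) ε := ⟨by linarith, hε⟩
  constructor
  · -- construction of H₂
    refine ⟨fun x y => if y = 0 then deriv (fun t => Y x t) 0 else Y x y / y, ?_, ?_, ?_, ?_⟩
    · -- analyticity
      rintro ⟨x, y⟩ hxy
      have hy : y ∈ Ioo (-ε) ε := hxy.2
      by_cases hy0 : y = 0
      · subst hy0
        obtain ⟨h, hhan, hev⟩ := stmt_divide (fun p : ℝ × ℝ => Y p.1 p.2) x
          (hYan (x, 0) ⟨mem_univ _, h0mem⟩)
          (Filter.Eventually.of_forall (fun x' => hY0 x'))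
        have hevAn : ∀ᶠ q in nhds ((x, 0) : ℝ × ℝ), AnalyticAt ℝ h q :=
          hhan.eventually_analyticAt
        obtain ⟨U, hU, hUopen, hxU⟩ := eventually_nhds_iff.mp (hev.and hevAn)
        have key : (fun q : ℝ × ℝ => if q.2 = 0 then deriv (fun t => Y q.1 t) 0
            else Y q.1 q.2 / q.2) =ᶠ[nhds ((x, 0) : ℝ × ℝ)] h := by
          filter_upwards [hUopen.mem_nhds hxU] with q hq
          by_cases h2 : q.2 = 0
          · simp only [if_pos h2]
            have hqeta : ((q.1 : ℝ), (0:ℝ)) = q := by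
              rw [← h2]
            have hq' : ((q.1 : ℝ), (0:ℝ)) ∈ U := by rw [hqeta]; exact hq
            have cont : Filter.Tendsto (fun t : ℝ => ((q.1, t) : ℝ × ℝ)) (nhds 0)
                (nhds ((q.1 : ℝ), (0:ℝ))) :=
              ((continuous_const.prodMk continuous_id).tendsto (0:ℝ))
            have hUev : ∀ᶠ t in nhds (0:ℝ), ((q.1, t) : ℝ × ℝ) ∈ U :=
              cont (hUopen.mem_nhds hq')
            have hder_ev : (fun t => Y q.1 t) =ᶠ[nhds (0:ℝ)]
                (fun t => t * h (q.1, t)) := by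
              filter_upwards [hUev] with t ht
              exact (hU _ ht).1
            have hdiff : DifferentiableAt ℝ (fun t => h (q.1, t)) 0 :=
              (stmt_slice (hU _ hq').2).differentiableAt
            have hD : HasDerivAt (fun t => t * h (q.1, t))
                (1 * h (q.1, 0) + 0 * deriv (fun t => h (q.1, t)) 0) 0 :=
              (hasDerivAt_id (0:ℝ)).mul hdiff.hasDerivAt
            calc deriv (fun t => Y q.1 t) 0 = deriv (fun t => t * h (q.1, t)) 0 :=
                  hder_ev.deriv_eq
              _ = 1 * h (q.1, 0) + 0 * deriv (fun t => h (q.1, t)) 0 := hD.deriv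
              _ = h (q.1, 0) := by ring
              _ = h q := by rw [hqeta]
          · simp only [if_neg h2]
            rw [(hU q hq).1, mul_div_cancel_left₀ _ h2]
        exact hhan.congr key.symm
      · have hev : ∀ᶠ q : ℝ × ℝ in nhds ((x, y) : ℝ × ℝ), q.2 ≠ 0 :=
          continuousAt_snd.eventually_ne hy0
        have hdiv : AnalyticAt ℝ (fun q : ℝ × ℝ => Y q.1 q.2 / q.2) (x, y) :=
          (hYan (x, y) hxy).div analyticAt_snd hy0
        refine hdiv.congr ?_
        filter_upwards [hev] with q hq
        simp [hq]
    · -- periodicity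
      intro x y
      by_cases hy0 : y = 0
      · subst hy0
        have : (fun t => Y (x + 2*π) t) = fun t => Y x t := funext (fun t => hYper x t)
        simp only [this, hYper]
      · simp only [if_neg hy0, hYper]
    · -- factorization
      intro x y hy
      by_cases hy0 : y = 0
      · subst hy0
        simp [hY0 x]
      · simp only [if_neg hy0]
        rw [mul_div_cancel₀ _ hy0]
    · -- positivity
      intro hpos x
      simpa using hpos x
  · -- uniqueness of the exponent
    intro k hk H' hH'an hEq hne
    by_contra hne1
    have hk2 : 2 ≤ k := by omega
    -- area preservation at (0,0) forces ∂_y Y (0,0) ≠ 0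
    have hYx0 : deriv (fun t => Y t 0) 0 = 0 := by
      have : (fun t => Y t 0) = fun _ => (0:ℝ) := funext (fun t => hY0 t)
      rw [this, deriv_const]
    have harea' := harea 0 0 h0mem
    rw [hYx0, mul_zero, sub_zero] at harea'
    have hYy_ne : deriv (fun t => Y 0 t) 0 ≠ 0 := by
      intro h
      rw [h, mul_zero] at harea'
      exact zero_ne_one harea'
    -- but the factorization forces it to vanish
    have hevY : (fun t => Y 0 t) =ᶠ[nhds (0:ℝ)] (fun t => t^k * H' 0 t) := by
      filter_upwards [isOpen_Ioo.mem_nhds h0mem] with t ht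
      exact hEq 0 t ht
    have hdiff : DifferentiableAt ℝ (fun t => H' 0 t) 0 :=
      (stmt_slice (hH'an ((0:ℝ), (0:ℝ)) ⟨mem_univ _, h0mem⟩)).differentiableAt
    have hD : HasDerivAt (fun t => t^k * H' 0 t)
        ((k : ℝ) * (0:ℝ)^(k-1) * H' 0 0 + (0:ℝ)^k * deriv (fun t => H' 0 t) 0) 0 :=
      (hasDerivAt_pow k (0:ℝ)).mul hdiff.hasDerivAt
    have hder0 : deriv (fun t => Y 0 t) 0 = 0 := by
      rw [hevY.deriv_eq, hD.deriv]
      have h1 : (0:ℝ)^(k-1) = 0 := zero_pow (by omega)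
      have h2 : (0:ℝ)^k = 0 := zero_pow (by omega)
      rw [h1, h2]
      ring
    exact hYy_ne hder0
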